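/- For all integers n, m, r: F_{n+r}*L_{m+r} + (-1)^{r+1}*F_n*L_m = F_r*L_{n+m+r}. -/

import Mathlib

def lucas : ℕ → ℕ
  | 0 => 2
  | 1 => 1
  | n + 2 => lucas (n + 1) + lucas n

def fibZ (n : ℤ) : ℤ :=
  if 0 ≤ n then (Nat.fib n.toNat : ℤ) else (-1) ^ (n.natAbs + 1) * (Nat.fib n.natAbs : ℤ)

def lucasZ (n : ℤ) : ℤ :=
  if 0 ≤ n then (lucas n.toNat : ℤ) else (-1) ^ n.natAbs * (lucas n.natAbs : ℤ)

lemma fibZ_ofNat (n : ℕ) : fibZ (n : ℤ) = (Nat.fib n : ℤ) := by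
  simp [fibZ]

lemma fibZ_neg (n : ℕ) : fibZ (-(n : ℤ)) = (-1) ^ (n + 1) * (Nat.fib n : ℤ) := by
  cases n with
  | zero => simp [fibZ]
  | succ k =>
    have h : ¬ (0 : ℤ) ≤ -((k+1 : ℕ) : ℤ) := by omega
    rw [fibZ, if_neg h]
    have : ((-((k+1:ℕ):ℤ)).natAbs) = k+1 := by omega
    rw [this]

lemma fibZ_rec (k : ℤ) : fibZ (k + 2) = fibZ (k + 1) + fibZ k := by
  rcases le_or_gt 0 k with hk | hk
  · obtain ⟨a, rfl⟩ := Int.eq_ofNat_of_zero_le hk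
    have e2 : ((a : ℤ) + 2) = ((a + 2 : ℕ) : ℤ) := by push_cast; ring
    have e1 : ((a : ℤ) + 1) = ((a + 1 : ℕ) : ℤ) := by push_cast; ring
    rw [e2, e1, fibZ_ofNat, fibZ_ofNat, fibZ_ofNat, Nat.fib_add_two]
    push_cast; ring
  · rcases eq_or_lt_of_le (by omega : k ≤ -1) with h1 | h1
    · subst h1; decide
    · obtain ⟨j, hj⟩ : ∃ j : ℕ, k = -(j : ℤ) - 2 := ⟨(-k - 2).toNat, by omega⟩
      subst hj
      have e2 : (-(j:ℤ) - 2 + 2) = -((j : ℕ) : ℤ) := by ring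
      have e1 : (-(j:ℤ) - 2 + 1) = -(((j+1 : ℕ)) : ℤ) := by push_cast; ring
      have e0 : (-(j:ℤ) - 2) = -(((j+2 : ℕ)) : ℤ) := by push_cast; ring
      rw [e2, e1, e0, fibZ_neg, fibZ_neg, fibZ_neg, Nat.fib_add_two]
      push_cast
      ring

lemma fibZ_zero : fibZ 0 = 0 := by decide
lemma fibZ_one : fibZ 1 = 1 := by decide
lemma fibZ_two : fibZ 2 = 1 := by decide

lemma fibZ_addP (a b : ℤ)
    (h1 : fibZ (a + b) = fibZ a * fibZ (b + 1) + fibZ (a - 1) * fibZ b)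
    (h2 : fibZ (a + b + 1) = fibZ a * fibZ (b + 2) + fibZ (a - 1) * fibZ (b + 1)) :
    fibZ (a + b + 2) = fibZ a * fibZ (b + 3) + fibZ (a - 1) * fibZ (b + 2) := by
  have ra := fibZ_rec (a + b)
  have rb := fibZ_rec b
  have rc := fibZ_rec (b + 1)
  rw [show b + 1 + 2 = b + 3 by ring, show b + 1 + 1 = b + 2 by ring] at rc
  linear_combination ra + h1 + h2 - fibZ a * rc - fibZ (a - 1) * rb

lemma fibZ_addM (a b : ℤ)
    (h1 : fibZ (a + b + 1) = fibZ a * fibZ (b + 2) + fibZ (a - 1) * fibZ (b + 1))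
    (h2 : fibZ (a + b + 2) = fibZ a * fibZ (b + 3) + fibZ (a - 1) * fibZ (b + 2)) :
    fibZ (a + b) = fibZ a * fibZ (b + 1) + fibZ (a - 1) * fibZ b := by
  have ra := fibZ_rec (a + b)
  have rb := fibZ_rec b
  have rc := fibZ_rec (b + 1)
  rw [show b + 1 + 2 = b + 3 by ring, show b + 1 + 1 = b + 2 by ring] at rc
  linear_combination -ra - h1 + h2 + fibZ a * rc + fibZ (a - 1) * rb

lemma fibZ_add (a b : ℤ) :
    fibZ (a + b) = fibZ a * fibZ (b + 1) + fibZ (a - 1) * fibZ b := by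
  have key : ∀ b : ℤ, (fibZ (a + b) = fibZ a * fibZ (b + 1) + fibZ (a - 1) * fibZ b)
      ∧ (fibZ (a + b + 1) = fibZ a * fibZ (b + 2) + fibZ (a - 1) * fibZ (b + 1)) := by
    intro b
    induction b using Int.induction_on with
    | zero =>
      constructor
      · rw [show a + 0 = a by ring, show (0:ℤ)+1 = 1 by ring, fibZ_zero, fibZ_one]; ring
      · have h := fibZ_rec (a - 1)
        rw [show a - 1 + 2 = a + 0 + 1 by ring, show a - 1 + 1 = a by ring] at h
        rw [show (0:ℤ)+1 = 1 by ring, show (0:ℤ)+2 = 2 by ring, fibZ_one, fibZ_two, h]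
        ring
    | succ i ih =>
      obtain ⟨h1, h2⟩ := ih
      have h3 := fibZ_addP a i h1 h2
      constructor
      · rw [show a + ((i:ℤ)+1) = a + i + 1 by ring, show (i:ℤ)+1+1 = (i:ℤ)+2 by ring]
        exact h2
      · rw [show a + ((i:ℤ)+1) + 1 = a + i + 2 by ring, show (i:ℤ)+1+2 = (i:ℤ)+3 by ring,
          show (i:ℤ)+1+1 = (i:ℤ)+2 by ring]
        exact h3
    | pred i ih =>
      obtain ⟨h1, h2⟩ := ih
      have h1' : fibZ (a + (-(i:ℤ)-1) + 1) = fibZ a * fibZ ((-(i:ℤ)-1) + 2) + fibZ (a - 1) * fibZ ((-(i:ℤ)-1) + 1) := by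
        rw [show a + (-(i:ℤ)-1) + 1 = a + -(i:ℤ) by ring, show (-(i:ℤ)-1)+2 = -(i:ℤ)+1 by ring,
          show (-(i:ℤ)-1)+1 = -(i:ℤ) by ring]
        exact h1
      have h2' : fibZ (a + (-(i:ℤ)-1) + 2) = fibZ a * fibZ ((-(i:ℤ)-1) + 3) + fibZ (a - 1) * fibZ ((-(i:ℤ)-1) + 2) := by
        rw [show a + (-(i:ℤ)-1) + 2 = a + -(i:ℤ) + 1 by ring, show (-(i:ℤ)-1)+3 = -(i:ℤ)+2 by ring,
          show (-(i:ℤ)-1)+2 = -(i:ℤ)+1 by ring]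
        exact h2
      have h0 := fibZ_addM a (-(i:ℤ)-1) h1' h2'
      exact ⟨h0, h1'⟩
  exact (key b).1

noncomputable def epsZ (r : ℤ) : ℤ := (((-1 : ℤˣ) ^ r : ℤˣ) : ℤ)

lemma epsZ_zero : epsZ 0 = 1 := by simp [epsZ]

lemma epsZ_succ (r : ℤ) : epsZ (r + 1) = -epsZ r := by
  simp [epsZ, zpow_add_one]

lemma epsZ_pred (r : ℤ) : epsZ (r - 1) = -epsZ r := by
  have := epsZ_succ (r - 1)
  rw [show r - 1 + 1 = r by ring] at this
  linarith

lemma cassini (r : ℤ) : fibZ (r + 1) * fibZ (r - 1) - fibZ r * fibZ r = epsZ r := by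
  induction r using Int.induction_on with
  | zero =>
    rw [epsZ_zero, show (0:ℤ)+1 = 1 by ring, show (0:ℤ)-1 = -1 by ring, fibZ_zero, fibZ_one]
    decide
  | succ i ih =>
    have h1 := fibZ_rec ((i:ℤ) - 1)
    rw [show (i:ℤ) - 1 + 2 = (i:ℤ) + 1 by ring, show (i:ℤ) - 1 + 1 = (i:ℤ) by ring] at h1
    have h2 := fibZ_rec (i : ℤ)
    rw [epsZ_succ, show (i:ℤ)+1+1 = (i:ℤ)+2 by ring, show (i:ℤ)+1-1 = (i:ℤ) by ring]
    linear_combination -ih + fibZ i * h2 - fibZ (i+1) * h1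
  | pred i ih =>
    have h1 := fibZ_rec (-(i:ℤ) - 1)
    rw [show -(i:ℤ) - 1 + 2 = -(i:ℤ) + 1 by ring, show -(i:ℤ) - 1 + 1 = -(i:ℤ) by ring] at h1
    have h2 := fibZ_rec (-(i:ℤ) - 2)
    rw [show -(i:ℤ) - 2 + 2 = -(i:ℤ) by ring, show -(i:ℤ) - 2 + 1 = -(i:ℤ) - 1 by ring] at h2
    rw [show -(i:ℤ) - 1 + 1 = -(i:ℤ) by ring, show -(i:ℤ) - 1 - 1 = -(i:ℤ) - 2 by ring,
      epsZ_pred]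
    rw [show -(i:ℤ) - 2 = -(i:ℤ) - 1 - 1 by ring] at h2 ⊢
    linear_combination -ih + fibZ (-(i:ℤ)-1) * h1 - fibZ (-(i:ℤ)) * h2

lemma lucas_fib (n : ℕ) : lucas (n + 1) = Nat.fib n + Nat.fib (n + 2) := by
  induction n using Nat.twoStepInduction with
  | zero => decide
  | one => decide
  | more n ih1 ih2 =>
    have : lucas (n + 1 + 2) = lucas (n + 2) + lucas (n + 1) := rfl
    rw [show n + 2 + 1 = n + 1 + 2 by ring, this, ih1, ih2,
      Nat.fib_add_two (n := n + 2), Nat.fib_add_two (n := n + 1), Nat.fib_add_two (n := n)]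
    ring

lemma lucasZ_eq (k : ℤ) : lucasZ k = fibZ (k - 1) + fibZ (k + 1) := by
  rcases lt_trichotomy k 0 with hk | rfl | hk
  · obtain ⟨j, rfl⟩ : ∃ j : ℕ, k = -((j+1 : ℕ) : ℤ) := ⟨(-k-1).toNat, by omega⟩
    have hneg : ¬ (0:ℤ) ≤ -((j+1:ℕ):ℤ) := by omega
    rw [lucasZ, if_neg hneg]
    have hna : ((-((j+1:ℕ):ℤ)).natAbs) = j + 1 := by omega
    rw [hna]
    rw [show -((j+1:ℕ):ℤ) - 1 = -((j+2:ℕ):ℤ) by push_cast; ring,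
      show -((j+1:ℕ):ℤ) + 1 = -((j:ℕ):ℤ) by push_cast; ring, fibZ_neg, fibZ_neg,
      lucas_fib j, Nat.fib_add_two (n := j)]
    push_cast
    ring
  · decide
  · obtain ⟨j, rfl⟩ : ∃ j : ℕ, k = ((j+1 : ℕ) : ℤ) := ⟨(k-1).toNat, by omega⟩
    have hpos : (0:ℤ) ≤ ((j+1:ℕ):ℤ) := by positivity
    rw [lucasZ, if_pos hpos]
    have hna : (((j+1:ℕ):ℤ)).toNat = j + 1 := by omega
    rw [hna]
    rw [show ((j+1:ℕ):ℤ) - 1 = ((j:ℕ):ℤ) by push_cast; ring,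
      show ((j+1:ℕ):ℤ) + 1 = ((j+2:ℕ):ℤ) by push_cast; ring, fibZ_ofNat, fibZ_ofNat,
      lucas_fib j]
    push_cast
    ring

lemma core (n m r : ℤ) :
    fibZ (n + r) * fibZ (m + r) - fibZ r * fibZ (n + m + r) = epsZ r * fibZ n * fibZ m := by
  have A1 := fibZ_add r n
  rw [show r + n = n + r by ring] at A1
  have A2 := fibZ_add r m
  rw [show r + m = m + r by ring] at A2
  have A3 := fibZ_add r (n + m)
  rw [show r + (n + m) = n + m + r by ring, show n + m + 1 = (n+m)+1 by ring] at A3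
  have A4 := fibZ_add (n + 1) m
  rw [show n + 1 + m = (n+m)+1 by ring, show n + 1 - 1 = n by ring] at A4
  have A5 := fibZ_add n m
  have hN := fibZ_rec (n - 1)
  rw [show n - 1 + 2 = n + 1 by ring, show n - 1 + 1 = n by ring] at hN
  have hR := fibZ_rec (r - 1)
  rw [show r - 1 + 2 = r + 1 by ring, show r - 1 + 1 = r by ring] at hR
  have hC := cassini r
  rw [A1, A2, A3, A4, A5]
  linear_combination fibZ r * fibZ (r-1) * fibZ m * hN + fibZ n * fibZ m * hC
    - fibZ n * fibZ m * fibZ (r-1) * hR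

theorem stmt4 (n m r : ℤ) :
    fibZ (n + r) * lucasZ (m + r) + (((-1 : ℤˣ) ^ (r + 1) : ℤˣ) : ℤ) * fibZ n * lucasZ m =
      fibZ r * lucasZ (n + m + r) := by
  have he : (((-1 : ℤˣ) ^ (r + 1) : ℤˣ) : ℤ) = -epsZ r := epsZ_succ r
  rw [he, lucasZ_eq (m + r), lucasZ_eq m, lucasZ_eq (n + m + r)]
  have C1 := core n (m - 1) r
  rw [show m - 1 + r = m + r - 1 by ring, show n + (m - 1) + r = n + m + r - 1 by ring] at C1
  have C2 := core n (m + 1) r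
  rw [show m + 1 + r = m + r + 1 by ring, show n + (m + 1) + r = n + m + r + 1 by ring] at C2
  linear_combination C1 + C2
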